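/- Let G(∘) and G(∗) be two group structures on a finite set G of odd cardinality n. Then for every g ∈ G, d(g) ≠ 2, where d(g) = |{h ∈ G : g∘h ≠ g∗h}|. -/
import Mathlib

private lemma sign_mulLeft_eq_one {G : Type*} [Fintype G] [DecidableEq G] [Group G]
    (hodd : Odd (Fintype.card G)) (g : G) :
    Equiv.Perm.sign (Equiv.mulLeft g) = 1 := by
  have h1 : (Equiv.mulLeft g) ^ (Fintype.card G) = 1 := by
    have : g ^ (Fintype.card G) = 1 := pow_card_eq_one
    rw [Equiv.pow_mulLeft, this, Equiv.mulLeft_one]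
  have h2 : (Equiv.Perm.sign (Equiv.mulLeft g)) ^ (Fintype.card G) = 1 := by
    rw [← map_pow, h1, map_one]
  obtain ⟨k, hk⟩ := hodd
  have hsq : (Equiv.Perm.sign (Equiv.mulLeft g)) ^ 2 = 1 := Int.units_sq _
  calc Equiv.Perm.sign (Equiv.mulLeft g)
      = (Equiv.Perm.sign (Equiv.mulLeft g)) ^ (2 * k)
        * Equiv.Perm.sign (Equiv.mulLeft g) := by
        rw [pow_mul, hsq, one_pow, one_mul]
    _ = (Equiv.Perm.sign (Equiv.mulLeft g)) ^ (2 * k + 1) := by rw [pow_succ]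
    _ = 1 := by rw [← hk, h2]

theorem d_ne_two_of_odd {G : Type*} [Fintype G] [DecidableEq G]
    (s t : Group G) (hodd : Odd (Fintype.card G)) (g : G) :
    (Finset.univ.filter fun h : G => s.mul g h ≠ t.mul g h).card ≠ 2 := by
  intro hcard
  set σ : Equiv.Perm G := @Equiv.mulLeft G s g with hσ
  set τ : Equiv.Perm G := @Equiv.mulLeft G t g with hτ
  have happ : ∀ h : G, σ h = s.mul g h := fun h => rfl
  have happ' : ∀ h : G, τ h = t.mul g h := fun h => rfl
  have hsupp : (τ⁻¹ * σ).support = Finset.univ.filter fun h : G => s.mul g h ≠ t.mul g h := by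
    ext h
    simp only [Equiv.Perm.mem_support, Equiv.Perm.mul_apply, Finset.mem_filter,
      Finset.mem_univ, true_and, ← happ, ← happ']
    constructor
    · intro hne hc
      exact hne (by rw [hc]; simp)
    · intro hne hc
      exact hne (by simpa using congrArg τ hc)
  have hswap : (τ⁻¹ * σ).IsSwap :=
    Equiv.Perm.card_support_eq_two.mp (by rw [hsupp, hcard])
  have hsign : Equiv.Perm.sign (τ⁻¹ * σ) = -1 := hswap.sign_eq
  have h1 : Equiv.Perm.sign σ = 1 := @sign_mulLeft_eq_one G _ _ s hodd g
  have h2 : Equiv.Perm.sign τ = 1 := @sign_mulLeft_eq_one G _ _ t hodd g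
  rw [map_mul, map_inv, h1, h2] at hsign
  norm_num at hsign
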